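/- Let k, 𝔱, and w be positive integers, and let z be a nonnegative integer; write ℓ = ⌊log_2(k)⌋ + 1 and k_2^{(z;t)} = k·(2^{(z+ℓ)t} − 1)/(2^{z+ℓ} − 1). Then the following are equivalent: (1) there exist a covering system {r_j (mod m_j) : 1 ≤ j ≤ τ} and pairwise distinct primes p_1, …, p_τ, with p_j a primitive prime divisor of 2^{m_j} − 1 for each j, such that for every positive integer t with t ≡ 𝔱 (mod w) and every 1 ≤ j ≤ τ one has k_2^{(z;t)}·2^{r_j} ≡ −1 (mod p_j); (2) there exist a covering system {r'_i (mod m'_i) : 1 ≤ i ≤ τ'} and pairwise distinct primes p'_1, …, p'_{τ'}, with p'_i a primitive prime divisor of 2^{m'_i} − 1 for each i, such that for every positive integer t' with t' ≡ −𝔱 (mod w) and every 1 ≤ i ≤ τ' one has k_2^{(z;t')}·2^{r'_i} ≡ 1 (mod p'_i). -/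
import Mathlib

/-- A prime `p` is a primitive prime divisor of `2^m − 1` if `p ∣ 2^m − 1` and
`p ∤ 2^μ − 1` for every positive integer `μ < m`. -/
def IsPrimitivePrimeDivisor (p m : ℕ) : Prop :=
  p.Prime ∧ p ∣ 2 ^ m - 1 ∧ ∀ μ : ℕ, 0 < μ → μ < m → ¬ p ∣ 2 ^ μ - 1

/-- The 2-repstring `k_2^{(z;t)} = k·(2^{(z+ℓ)t} − 1)/(2^{z+ℓ} − 1)`, where
`ℓ = ⌊log_2(k)⌋ + 1` is the number of binary digits of `k`. -/
def repstring2 (k z t : ℕ) : ℕ :=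
  k * ((2 ^ ((z + (Nat.log 2 k + 1)) * t) - 1) / (2 ^ (z + (Nat.log 2 k + 1)) - 1))

open Finset in
private lemma geomS (L : ℕ) (hL : 0 < L) (t : ℕ) :
    (2 ^ L - 1) * ∑ i ∈ range t, 2 ^ (L * i) = 2 ^ (L * t) - 1 := by
  induction t with
  | zero => simp
  | succ t ih =>
    rw [Finset.sum_range_succ, Nat.mul_add, ih, Nat.mul_succ, pow_add]
    have h1 : 1 ≤ 2 ^ (L * t) := Nat.one_le_two_pow
    have h2 : 2 ≤ 2 ^ L := by
      calc 2 = 2 ^ 1 := rfl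
      _ ≤ 2 ^ L := Nat.pow_le_pow_right (by norm_num) hL
    have h3 : (2 ^ L - 1) * 2 ^ (L * t) = 2 ^ L * 2 ^ (L * t) - 2 ^ (L * t) :=
      Nat.sub_one_mul _ _
    have h4 : 2 ^ (L * t) ≤ 2 ^ L * 2 ^ (L * t) := Nat.le_mul_of_pos_left _ (by omega)
    have h5 : (2:ℕ) ^ L * 2 ^ (L * t) = 2 ^ (L * t) * 2 ^ L := Nat.mul_comm _ _
    omega

open Finset in
private lemma rep_eq (k z t : ℕ) :
    repstring2 k z t = k * ∑ i ∈ range t, 2 ^ ((z + (Nat.log 2 k + 1)) * i) := by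
  set L := z + (Nat.log 2 k + 1) with hLdef
  have hL : 0 < L := by omega
  have h2 : 2 ≤ 2 ^ L := by
    calc 2 = 2 ^ 1 := rfl
    _ ≤ 2 ^ L := Nat.pow_le_pow_right (by norm_num) hL
  unfold repstring2
  rw [← hLdef, ← geomS L hL t, Nat.mul_div_cancel_left _ (by omega)]

open Finset in
private lemma S_add (L a b : ℕ) :
    ∑ i ∈ range (a + b), (2:ℕ) ^ (L * i)
      = (∑ i ∈ range a, 2 ^ (L * i)) + 2 ^ (L * a) * ∑ i ∈ range b, 2 ^ (L * i) := by
  rw [Finset.sum_range_add, Finset.mul_sum]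
  congr 1
  refine Finset.sum_congr rfl fun i _ => ?_
  rw [← pow_add, ← Nat.mul_add]

open Finset in
private lemma key (p L r v t' kk : ℕ) (hp : p.Prime) (hp2 : p ≠ 2) (ε : ZMod p)
    (hA : ((kk * ∑ i ∈ range v, 2 ^ (L * i) : ℕ) : ZMod p) * 2 ^ r = ε)
    (hB : ((kk * ∑ i ∈ range (t' + 2 * v), 2 ^ (L * i) : ℕ) : ZMod p) * 2 ^ r = ε) :
    ((kk * ∑ i ∈ range t', 2 ^ (L * i) : ℕ) : ZMod p) * 2 ^ r * 2 ^ (L * v) = -ε := by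
  haveI : Fact p.Prime := ⟨hp⟩
  have h2ne : (2 : ZMod p) ≠ 0 := by
    intro h
    have : ((2 : ℕ) : ZMod p) = 0 := by exact_mod_cast h
    have := (ZMod.natCast_eq_zero_iff 2 p).mp this
    exact hp2 ((Nat.prime_dvd_prime_iff_eq hp Nat.prime_two).mp this)
  have hQ : ((2 : ZMod p)) ^ (L * v) ≠ 0 := pow_ne_zero _ h2ne
  have hsplit : (kk * ∑ i ∈ range (t' + 2 * v), (2:ℕ) ^ (L * i))
      = kk * (∑ i ∈ range v, 2 ^ (L * i))
        + 2 ^ (L * v) * (kk * ∑ i ∈ range v, 2 ^ (L * i))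
        + 2 ^ (L * v) * 2 ^ (L * v) * (kk * ∑ i ∈ range t', 2 ^ (L * i)) := by
    have e1 : t' + 2 * v = (v + v) + t' := by ring
    have e2 : (2:ℕ) ^ (L * (v + v)) = 2 ^ (L * v) * 2 ^ (L * v) := by
      rw [Nat.mul_add, pow_add]
    rw [e1, S_add, S_add, e2]
    ring
  rw [hsplit] at hB
  push_cast at hA hB ⊢
  have h5 : (2 : ZMod p) ^ (L * v) *
      ((2 : ZMod p) ^ (L * v) * ((kk : ZMod p) * (∑ i ∈ range t', (2:ZMod p) ^ (L * i)) * 2 ^ r)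
        + ε) = 0 := by
    linear_combination hB - (1 + (2 : ZMod p) ^ (L * v)) * hA
  rcases mul_eq_zero.mp h5 with h | h
  · exact absurd h hQ
  · linear_combination h

theorem stmt_19 (k 𝔱 w z : ℕ) (hk : 0 < k) (h𝔱 : 0 < 𝔱) (hw : 0 < w) :
    (∃ (τ : ℕ) (r m p : Fin τ → ℕ),
      (∀ j, 0 < m j) ∧
      (∀ n : ℤ, ∃ j, n ≡ (r j : ℤ) [ZMOD (m j : ℤ)]) ∧
      Function.Injective p ∧
      (∀ j, IsPrimitivePrimeDivisor (p j) (m j)) ∧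
      (∀ t : ℕ, 0 < t → t ≡ 𝔱 [MOD w] → ∀ j,
        p j ∣ repstring2 k z t * 2 ^ (r j) + 1)) ↔
    (∃ (τ' : ℕ) (r' m' p' : Fin τ' → ℕ),
      (∀ i, 0 < m' i) ∧
      (∀ n : ℤ, ∃ i, n ≡ (r' i : ℤ) [ZMOD (m' i : ℤ)]) ∧
      Function.Injective p' ∧
      (∀ i, IsPrimitivePrimeDivisor (p' i) (m' i)) ∧
      (∀ t' : ℕ, 0 < t' → (t' : ℤ) ≡ -(𝔱 : ℤ) [ZMOD (w : ℤ)] → ∀ i,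
        repstring2 k z t' * 2 ^ (r' i) ≡ 1 [MOD p' i])) := by
  set L := z + (Nat.log 2 k + 1) with hLdef
  have podd : ∀ (p m : ℕ), 0 < m → IsPrimitivePrimeDivisor p m → p ≠ 2 := by
    rintro p m hm ⟨hp, hdvd, -⟩ hp2
    subst hp2
    have h1 : (2:ℕ) ∣ 2 ^ m := dvd_pow_self 2 hm.ne'
    have h2 : (2:ℕ) ∣ 2 ^ m - (2 ^ m - 1) := Nat.dvd_sub h1 hdvd
    have h3 : 1 ≤ (2:ℕ) ^ m := Nat.one_le_two_pow
    have h4 : 2 ^ m - (2 ^ m - 1) = 1 := by omega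
    rw [h4] at h2
    omega
  constructor
  · rintro ⟨τ, r, m, p, hm, hcov, hinj, hprim, hdvd⟩
    refine ⟨τ, fun j => r j + L * 𝔱, m, p, hm, ?_, hinj, hprim, ?_⟩
    · intro n
      obtain ⟨j, hj⟩ := hcov (n - (L * 𝔱 : ℕ))
      refine ⟨j, ?_⟩
      have h2 := hj.add_right ((L * 𝔱 : ℕ) : ℤ)
      rw [sub_add_cancel] at h2
      push_cast
      push_cast at h2
      exact h2
    · intro t' ht' hmod j
      have hp : (p j).Prime := (hprim j).1
      have hp2 : p j ≠ 2 := podd (p j) (m j) (hm j) (hprim j)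
      have hmod2 : (t' + 2 * 𝔱) ≡ 𝔱 [MOD w] := by
        rw [← Int.natCast_modEq_iff]
        push_cast
        have h5 := hmod.add_right (2 * (𝔱 : ℤ))
        have h6 : (-(𝔱:ℤ) + 2 * 𝔱) = (𝔱:ℤ) := by ring
        rwa [h6] at h5
      have hd1 := hdvd 𝔱 h𝔱 rfl j
      have hd2 := hdvd (t' + 2 * 𝔱) (by omega) hmod2 j
      have toZ : ∀ N : ℕ, p j ∣ N * 2 ^ (r j) + 1 →
          ((N : ZMod (p j)) * 2 ^ (r j) = -1) := by
        intro N hN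
        have h := (ZMod.natCast_eq_zero_iff _ _).mpr hN
        push_cast at h
        linear_combination h
      have hA := toZ _ hd1
      have hB := toZ _ hd2
      rw [rep_eq, ← hLdef] at hA hB
      have hK := key (p j) L (r j) 𝔱 t' k hp hp2 (-1) hA hB
      rw [← ZMod.natCast_eq_natCast_iff, rep_eq, ← hLdef]
      push_cast
      push_cast at hK
      rw [pow_add]
      linear_combination hK
  · rintro ⟨τ, r, m, p, hm, hcov, hinj, hprim, hrml⟩
    set v := 𝔱 * (w - 1) + w with hvdef
    have hv : 0 < v := by omega
    have hvz : (v : ℤ) = 𝔱 * w - 𝔱 + w := by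
      rw [hvdef]
      push_cast [Nat.cast_sub hw]
      ring
    have hvmod : (v : ℤ) ≡ -(𝔱:ℤ) [ZMOD (w:ℤ)] := by
      refine Int.modEq_iff_dvd.mpr ⟨-((𝔱:ℤ)+1), ?_⟩
      rw [hvz]; ring
    refine ⟨τ, fun i => r i + L * v, m, p, hm, ?_, hinj, hprim, ?_⟩
    · intro n
      obtain ⟨j, hj⟩ := hcov (n - (L * v : ℕ))
      refine ⟨j, ?_⟩
      have h2 := hj.add_right ((L * v : ℕ) : ℤ)
      rw [sub_add_cancel] at h2
      push_cast
      push_cast at h2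
      exact h2
    · intro t ht hmod j
      have hp : (p j).Prime := (hprim j).1
      have hp2 : p j ≠ 2 := podd (p j) (m j) (hm j) (hprim j)
      have htz : (t:ℤ) ≡ (𝔱:ℤ) [ZMOD (w:ℤ)] := Int.natCast_modEq_iff.mpr hmod
      have hmod2 : ((t + 2 * v : ℕ):ℤ) ≡ -(𝔱:ℤ) [ZMOD (w:ℤ)] := by
        push_cast
        have h5 := htz.add (hvmod.mul_left 2)
        have h6 : ((𝔱:ℤ) + 2 * -(𝔱:ℤ)) = -(𝔱:ℤ) := by ring
        rwa [h6] at h5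
      have hd1 := hrml v hv hvmod j
      have hd2 := hrml (t + 2 * v) (by omega) hmod2 j
      have toZ : ∀ N : ℕ, (N * 2 ^ (r j) ≡ 1 [MOD p j]) →
          ((N : ZMod (p j)) * 2 ^ (r j) = 1) := by
        intro N hN
        have h := (ZMod.natCast_eq_natCast_iff _ _ _).mpr hN
        push_cast at h
        exact h
      have hA := toZ _ hd1
      have hB := toZ _ hd2
      rw [rep_eq, ← hLdef] at hA hB
      have hK := key (p j) L (r j) v t k hp hp2 1 hA hB
      rw [← ZMod.natCast_eq_zero_iff, rep_eq, ← hLdef]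
      push_cast
      push_cast at hK
      rw [pow_add]
      linear_combination hK
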